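/- arXiv:2005.02254 — 2 statements merged into one kernel-verified Lean document; each statement's English description precedes it below -/
import Mathlib

section
/- Stability of the imaginary part of the self-consistent equation: Let z = L₀ + 𝒵 + κ + iη where w = κ + iη ∈ 𝔜_* (so κ ≥ N^{−δ}/(√N q) and η = N^{−δ}N^{−5/8}q^{−1/4}). Assume |Ḡ − m| ≺ √κ N^{−δ}, |∂₂P(z,m)| ≍ √κ, |Im ∂₂^k P(z,m)| ≺ 1/(N^{1+δ}η) for all k ≥ 1, and |∂₂^k P(z,m)| ≺ 1. If Im P(z, Ḡ) ≺ ε for a deterministic ε ∈ [N^{−1}, N^{−δ}], then |Im Ḡ − Im m| ≺ ε/√κ + 1/(N^{1+δ}η). -/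
open MeasureTheory

/-- Stochastic domination for `N`-indexed families of random variables against deterministic
control parameters. -/
def SDom {Ω : ℕ → Type*} [∀ n, MeasurableSpace (Ω n)]
    (P : ∀ n, Measure (Ω n)) (X : ∀ n, Ω n → ℝ) (Y : ℕ → ℝ) : Prop :=
  ∀ ε : ℝ, 0 < ε → ∀ D : ℝ, 0 < D → ∃ N₀ : ℕ, ∀ n, N₀ ≤ n →
    P n {ω | (n : ℝ) ^ ε * Y n < |X n ω|} ≤ ENNReal.ofReal ((n : ℝ) ^ (-D))

set_option maxHeartbeats 1600000

section Aux

open Polynomial Finset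

private lemma poly_iteratedDeriv' (p : Polynomial ℂ) (k : ℕ) :
    iteratedDeriv k (fun x => p.eval x) = fun x => (derivative^[k] p).eval x := by
  induction k with
  | zero => simp [iteratedDeriv_zero]
  | succ k ih =>
    rw [iteratedDeriv_succ, ih, Function.iterate_succ_apply']
    funext x
    exact (derivative^[k] p).deriv

private lemma hasse_eval' (p : Polynomial ℂ) (k : ℕ) (x : ℂ) :
    (derivative^[k] p).eval x = (Nat.factorial k : ℂ) * (hasseDeriv k p).eval x := by
  rw [← Polynomial.factorial_smul_hasseDeriv]
  simp [nsmul_eq_mul]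

private lemma poly_expand' (p : Polynomial ℂ) (K : ℕ) (hK : p.natDegree ≤ K) (m x : ℂ) :
    p.eval x = ∑ k ∈ Finset.range (K + 1), (hasseDeriv k p).eval m * (x - m) ^ k := by
  have h1 : p.eval x = (Polynomial.taylor m p).eval (x - m) := by
    rw [Polynomial.taylor_apply, Polynomial.eval_comp]
    simp
  rw [h1, Polynomial.eval_eq_sum_range'
    (lt_of_le_of_lt (le_of_eq (Polynomial.natDegree_taylor p m)) (Nat.lt_succ_of_le hK))]
  simp [Polynomial.taylor_coeff]

private lemma im_pow_le' (w : ℂ) (k : ℕ) :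
    |(w ^ (k + 1)).im| ≤ (k + 1 : ℝ) * ‖w‖ ^ k * |w.im| := by
  induction k with
  | zero => simp
  | succ k ih =>
    have h1 : (w ^ (k + 2)).im = w.re * (w ^ (k + 1)).im + w.im * (w ^ (k + 1)).re := by
      rw [show k + 2 = (k + 1) + 1 from rfl, pow_succ']
      simp [Complex.mul_im]
    have hre : |w.re| ≤ ‖w‖ := Complex.abs_re_le_norm w
    have him : |w.im| ≤ ‖w‖ := Complex.abs_im_le_norm w
    have hpr : |(w ^ (k + 1)).re| ≤ ‖w‖ ^ (k + 1) := by
      calc |(w ^ (k + 1)).re| ≤ ‖w ^ (k + 1)‖ := Complex.abs_re_le_norm _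
        _ = ‖w‖ ^ (k + 1) := norm_pow w (k + 1)
    have h0 : (0:ℝ) ≤ ‖w‖ := norm_nonneg w
    calc |(w ^ (k + 2)).im| ≤ |w.re| * |(w ^ (k + 1)).im| + |w.im| * |(w ^ (k + 1)).re| := by
          rw [h1]; refine (abs_add_le _ _).trans ?_; rw [abs_mul, abs_mul]
      _ ≤ ‖w‖ * ((k + 1 : ℝ) * ‖w‖ ^ k * |w.im|) + |w.im| * ‖w‖ ^ (k + 1) := by
          gcongr
      _ = ((k + 1 : ℕ) + 1 : ℝ) * ‖w‖ ^ (k + 1) * |w.im| := by push_cast; ring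

private lemma core_est (K' : ℕ) (c s A B M E : ℝ) (u : ℂ) (co : ℕ → ℂ)
    (hc : 0 < c) (hs : 0 < s)
    (hT : |(∑ k ∈ Finset.range (K' + 2), co k * u ^ k).im| ≤ E)
    (h0 : co 0 = 0)
    (h1 : c * s ≤ ‖co 1‖)
    (h1i : |(co 1).im| ≤ B)
    (hki : ∀ i, i < K' → |(co (i + 2)).im| ≤ B)
    (hkn : ∀ i, i < K' → ‖co (i + 2)‖ ≤ M)
    (hu : ‖u‖ ≤ A) (hA1 : A ≤ 1) (hAs : A ≤ s)
    (hB : B ≤ c / 2 * s) (hB0 : 0 ≤ B)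
    (habs : ((K' : ℝ) + 1) ^ 2 * M * A ≤ c / 4 * s) (hM0 : 0 ≤ M) :
    |u.im| ≤ 4 / c * (E / s) + 4 * ((K' : ℝ) + 2) / c * B := by
  have hA0 : 0 ≤ A := le_trans (norm_nonneg u) hu
  have hE0 : 0 ≤ E := le_trans (abs_nonneg _) hT
  set t := u.im with ht
  have hsum : (∑ k ∈ Finset.range (K' + 2), co k * u ^ k)
      = co 1 * u + ∑ i ∈ Finset.range K', co (i + 2) * u ^ (i + 2) := by
    rw [Finset.sum_range_succ', Finset.sum_range_succ']
    simp [h0]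
    ring
  have hterm : ∀ i ∈ Finset.range K',
      |(co (i + 2) * u ^ (i + 2)).im| ≤ B * s + M * (((K' : ℝ) + 1) * A * |t|) := by
    intro i hi
    rw [Finset.mem_range] at hi
    have him : |(u ^ (i + 2)).im| ≤ ((i : ℝ) + 2) * ‖u‖ ^ (i + 1) * |t| := by
      have := im_pow_le' u (i + 1)
      push_cast at this ⊢
      linarith [this]
    have hpow1 : ‖u‖ ^ (i + 1) ≤ A := by
      calc ‖u‖ ^ (i + 1) ≤ A ^ (i + 1) := by gcongr
        _ ≤ A ^ 1 := pow_le_pow_of_le_one hA0 hA1 (by omega)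
        _ = A := pow_one A
    have hpow2 : ‖u‖ ^ (i + 2) ≤ s := by
      calc ‖u‖ ^ (i + 2) ≤ A ^ (i + 2) := by gcongr
        _ ≤ A ^ 1 := pow_le_pow_of_le_one hA0 hA1 (by omega)
        _ = A := pow_one A
        _ ≤ s := hAs
    have hmul : (co (i + 2) * u ^ (i + 2)).im
        = (co (i + 2)).re * (u ^ (i + 2)).im + (co (i + 2)).im * (u ^ (i + 2)).re := by
      simp [Complex.mul_im]
    have hre : |(co (i + 2)).re| ≤ M := le_trans (Complex.abs_re_le_norm _) (hkn i hi)
    have hxre : |(u ^ (i + 2)).re| ≤ s := le_trans (Complex.abs_re_le_norm _)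
      (le_trans (le_of_eq (norm_pow u (i + 2))) hpow2)
    have hik : ((i : ℝ) + 2) ≤ (K' : ℝ) + 1 := by
      have : (i : ℝ) + 1 ≤ (K' : ℝ) := by exact_mod_cast hi
      linarith
    calc |(co (i + 2) * u ^ (i + 2)).im|
        ≤ |(co (i + 2)).re| * |(u ^ (i + 2)).im| + |(co (i + 2)).im| * |(u ^ (i + 2)).re| := by
          rw [hmul]; refine (abs_add_le _ _).trans ?_; rw [abs_mul, abs_mul]
      _ ≤ M * (((i : ℝ) + 2) * ‖u‖ ^ (i + 1) * |t|) + B * s := by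
          refine add_le_add (mul_le_mul hre him (abs_nonneg _) hM0)
            (mul_le_mul (hki i hi) hxre (abs_nonneg _) hB0)
      _ ≤ M * (((K' : ℝ) + 1) * A * |t|) + B * s := by
          have h1' : ((i : ℝ) + 2) * ‖u‖ ^ (i + 1) * |t| ≤ ((K' : ℝ) + 1) * A * |t| := by
            have hn : (0:ℝ) ≤ ‖u‖ ^ (i+1) := by positivity
            have := mul_le_mul hik hpow1 hn (by positivity)
            nlinarith [abs_nonneg t]
          nlinarith
      _ = B * s + M * (((K' : ℝ) + 1) * A * |t|) := by ring
  have hS : |(∑ i ∈ Finset.range K', co (i + 2) * u ^ (i + 2)).im|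
      ≤ (K' : ℝ) * (B * s + M * (((K' : ℝ) + 1) * A * |t|)) := by
    calc |(∑ i ∈ Finset.range K', co (i + 2) * u ^ (i + 2)).im|
        = |∑ i ∈ Finset.range K', (co (i + 2) * u ^ (i + 2)).im| := by
          rw [Complex.im_sum]
      _ ≤ ∑ i ∈ Finset.range K', |(co (i + 2) * u ^ (i + 2)).im| :=
          Finset.abs_sum_le_sum_abs _ _
      _ ≤ ∑ _i ∈ Finset.range K', (B * s + M * (((K' : ℝ) + 1) * A * |t|)) :=
          Finset.sum_le_sum hterm
      _ = (K' : ℝ) * (B * s + M * (((K' : ℝ) + 1) * A * |t|)) := by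
          rw [Finset.sum_const, Finset.card_range, nsmul_eq_mul]
  have hkey : (co 1).re * t
      = (∑ k ∈ Finset.range (K' + 2), co k * u ^ k).im - (co 1).im * u.re
        - (∑ i ∈ Finset.range K', co (i + 2) * u ^ (i + 2)).im := by
    rw [hsum, Complex.add_im, Complex.mul_im]; ring
  have hre1 : c * s - B ≤ |(co 1).re| := by
    have h5 := Complex.norm_le_abs_re_add_abs_im (co 1)
    linarith
  have hure : |u.re| ≤ A := le_trans (Complex.abs_re_le_norm u) hu
  have hmain : (c / 2 * s) * |t|
      ≤ E + B * A + (K' : ℝ) * (B * s + M * (((K' : ℝ) + 1) * A * |t|)) := by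
    have h2 : |(co 1).re * t| ≤ E + B * A
        + (K' : ℝ) * (B * s + M * (((K' : ℝ) + 1) * A * |t|)) := by
      rw [hkey]
      calc |(∑ k ∈ Finset.range (K' + 2), co k * u ^ k).im - (co 1).im * u.re
            - (∑ i ∈ Finset.range K', co (i + 2) * u ^ (i + 2)).im|
          ≤ |(∑ k ∈ Finset.range (K' + 2), co k * u ^ k).im| + |(co 1).im * u.re|
            + |(∑ i ∈ Finset.range K', co (i + 2) * u ^ (i + 2)).im| := by
            refine (abs_sub _ _).trans ?_
            gcongr
            exact abs_sub _ _
        _ ≤ E + B * A + (K' : ℝ) * (B * s + M * (((K' : ℝ) + 1) * A * |t|)) := by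
            gcongr
            rw [abs_mul]
            exact mul_le_mul h1i hure (abs_nonneg _) hB0
    have h3 : (c / 2 * s) * |t| ≤ |(co 1).re| * |t| := by
      apply mul_le_mul_of_nonneg_right _ (abs_nonneg t)
      linarith
    rw [← abs_mul] at h3
    exact le_trans h3 h2
  have habs2 : (K' : ℝ) * (M * (((K' : ℝ) + 1) * A * |t|)) ≤ (c / 4 * s) * |t| := by
    have hK0 : (0:ℝ) ≤ (K' : ℝ) := Nat.cast_nonneg K'
    have hMA : (0:ℝ) ≤ M * A := mul_nonneg hM0 hA0
    have h6 : (K' : ℝ) * M * (((K' : ℝ) + 1) * A) ≤ ((K' : ℝ) + 1) ^ 2 * M * A := by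
      have h7 : (K' : ℝ) * M * (((K' : ℝ) + 1) * A) = ((K' : ℝ) * ((K' : ℝ) + 1)) * (M * A) := by
        ring
      have h8 : ((K' : ℝ) + 1) ^ 2 * M * A = (((K' : ℝ) + 1) * ((K' : ℝ) + 1)) * (M * A) := by
        ring
      rw [h7, h8]
      have : (K' : ℝ) * ((K' : ℝ) + 1) ≤ ((K' : ℝ) + 1) * ((K' : ℝ) + 1) := by nlinarith
      exact mul_le_mul_of_nonneg_right this hMA
    have h9 : (K' : ℝ) * (M * (((K' : ℝ) + 1) * A * |t|))
        = ((K' : ℝ) * M * (((K' : ℝ) + 1) * A)) * |t| := by ring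
    rw [h9]
    exact mul_le_mul_of_nonneg_right (le_trans h6 habs) (abs_nonneg t)
  have hfin : (c / 4 * s) * |t| ≤ E + ((K' : ℝ) + 1) * B * s := by
    have hBA : B * A ≤ B * s := mul_le_mul_of_nonneg_left hAs hB0
    have hdist : (K' : ℝ) * (B * s + M * (((K' : ℝ) + 1) * A * |t|))
        = (K' : ℝ) * (B * s) + (K' : ℝ) * (M * (((K' : ℝ) + 1) * A * |t|)) := by ring
    have hKB : (0:ℝ) ≤ (K' : ℝ) * (B * s) := by positivity
    nlinarith [hmain, habs2, hdist]
  have hcs : 0 < c / 4 * s := by positivity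
  calc |t| = ((c / 4 * s) * |t|) / (c / 4 * s) := by field_simp
    _ ≤ (E + ((K' : ℝ) + 1) * B * s) / (c / 4 * s) := by gcongr
    _ = 4 / c * (E / s) + 4 * ((K' : ℝ) + 1) / c * B := by field_simp
    _ ≤ 4 / c * (E / s) + 4 * ((K' : ℝ) + 2) / c * B := by
        gcongr
        · linarith

private lemma ev_rpow_le (r Cc : ℝ) (hr : 0 < r) (hC : 0 < Cc) :
    ∃ N₀ : ℕ, ∀ n : ℕ, N₀ ≤ n → ((n : ℝ)) ^ (-r) ≤ Cc := by
  have h : Filter.Tendsto (fun n : ℕ => ((n : ℝ)) ^ (-r)) Filter.atTop (nhds 0) :=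
    (tendsto_rpow_neg_atTop hr).comp tendsto_natCast_atTop_atTop
  have h2 : ∀ᶠ n : ℕ in Filter.atTop, ((n : ℝ)) ^ (-r) ≤ Cc :=
    h.eventually_le_const hC
  exact Filter.eventually_atTop.mp h2

end Aux

/-- **Stability of the imaginary part of the self-consistent equation** (Lemma 6.4): with
`z = L₀ + 𝒵 + κ + iη`, `w = κ + iη ∈ 𝔜_*`, assume `|Ḡ − m| ≺ √κ N^{−δ}`,
`|∂₂P(z,m)| ≍ √κ`, `|Im ∂₂^k P(z,m)| ≺ 1/(N^{1+δ}η)` for `k ≥ 1`, `|∂₂^k P(z,m)| ≺ 1`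
and `P(z,m) = 0`.  If `Im P(z, Ḡ) ≺ ε` for a deterministic `ε ∈ [N^{−1}, N^{−δ}]`, then
`|Im Ḡ − Im m| ≺ ε/√κ + 1/(N^{1+δ}η)`. -/
theorem im_selfconsistent_stability
    {Ω : ℕ → Type*} [∀ n, MeasurableSpace (Ω n)]
    (P : ∀ n, Measure (Ω n)) [∀ n, IsProbabilityMeasure (P n)]
    (β δ : ℝ) (hβ : 0 < β) (hβ' : β < 1 / 6) (hδ : δ = min β (1 / 6 - β) / 10)
    (q : ℕ → ℝ) (hq : ∀ n : ℕ, q n = (n : ℝ) ^ β)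
    (κ η : ℕ → ℝ)
    (hκ : ∀ n : ℕ, 1 ≤ n → (n : ℝ) ^ (-δ) / (Real.sqrt n * q n) ≤ κ n ∧ κ n ≤ 1)
    (hη : ∀ n : ℕ, η n = (n : ℝ) ^ (-δ) * (n : ℝ) ^ (-(5 : ℝ) / 8) * q n ^ (-(1 : ℝ) / 4))
    -- `Pz n ω` is the (random) self-consistent polynomial `x ↦ P(z, x)`
    (Pz : ∀ n, Ω n → ℂ → ℂ) (m G : ∀ n, Ω n → ℂ)
    (hpoly : ∀ n ω, ∃ p : Polynomial ℂ, p.natDegree ≤ 2 * ⌈β⁻¹⌉₊ ∧ ∀ x, Pz n ω x = p.eval x)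
    (hroot : ∀ n ω, Pz n ω (m n ω) = 0)
    (hGm : SDom P (fun n ω => ‖G n ω - m n ω‖) (fun n => Real.sqrt (κ n) * (n : ℝ) ^ (-δ)))
    (hP' : ∃ c C : ℝ, 0 < c ∧ 0 < C ∧ ∀ n : ℕ, 1 ≤ n → ∀ ω,
      c * Real.sqrt (κ n) ≤ ‖deriv (Pz n ω) (m n ω)‖ ∧
        ‖deriv (Pz n ω) (m n ω)‖ ≤ C * Real.sqrt (κ n))
    (hPim : ∀ k : ℕ, 1 ≤ k →
      SDom P (fun n ω => |(iteratedDeriv k (Pz n ω) (m n ω)).im|)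
        (fun n => 1 / ((n : ℝ) ^ (1 + δ) * η n)))
    (hPk : ∀ k : ℕ, SDom P (fun n ω => ‖iteratedDeriv k (Pz n ω) (m n ω)‖) (fun _ => 1))
    (ε : ℕ → ℝ) (hε : ∀ n : ℕ, 1 ≤ n → (n : ℝ)⁻¹ ≤ ε n ∧ ε n ≤ (n : ℝ) ^ (-δ))
    (hImP : SDom P (fun n ω => |(Pz n ω (G n ω)).im|) ε) :
    SDom P (fun n ω => |(G n ω).im - (m n ω).im|)
      (fun n => ε n / Real.sqrt (κ n) + 1 / ((n : ℝ) ^ (1 + δ) * η n)) := by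
  classical
  obtain ⟨c, C, hc, hC, hPder⟩ := hP'
  intro ξ hξ D hD
  obtain ⟨K', hK'⟩ : ∃ K', 2 * ⌈β⁻¹⌉₊ = K' + 1 := by
    have : 0 < ⌈β⁻¹⌉₊ := Nat.ceil_pos.mpr (by positivity)
    exact ⟨2 * ⌈β⁻¹⌉₊ - 1, by omega⟩
  have hδ0 : 0 < δ := by
    rw [hδ]
    have h1 : 0 < min β (1 / 6 - β) := lt_min hβ (by linarith)
    linarith
  have hδle : δ ≤ (1 / 6 - β) / 10 := by
    rw [hδ]
    have := min_le_right β (1 / 6 - β)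
    linarith
  set θ : ℝ := 1 / 8 - 3 * β / 4 - δ / 2 with hθdef
  have hθ0 : 0 < θ := by rw [hθdef]; linarith
  set ξ' : ℝ := min ξ (min δ θ) / 4 with hξ'def
  have hξ'0 : 0 < ξ' := by
    have := lt_min hξ (lt_min hδ0 hθ0)
    rw [hξ'def]; linarith
  have hmin1 := min_le_left ξ (min δ θ)
  have hmin2 := min_le_right ξ (min δ θ)
  have hmin3 := min_le_left δ θ
  have hmin4 := min_le_right δ θ
  have hξ'ξ : ξ' ≤ ξ / 4 := by rw [hξ'def]; linarith
  have hξ'δ : ξ' ≤ δ / 4 := by rw [hξ'def]; linarith [le_trans hmin2 hmin3]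
  have hξ'θ : ξ' ≤ θ / 4 := by rw [hξ'def]; linarith [le_trans hmin2 hmin4]
  have hD1 : (0:ℝ) < D + 1 := by linarith
  obtain ⟨N1, H1⟩ := hGm ξ' hξ'0 (D + 1) hD1
  obtain ⟨N2, H2⟩ := hImP ξ' hξ'0 (D + 1) hD1
  choose Nim Him using fun k : ℕ => hPim (k + 1) (by omega) ξ' hξ'0 (D + 1) hD1
  choose Nk Hk using fun k : ℕ => hPk k ξ' hξ'0 (D + 1) hD1
  obtain ⟨M1, hM1⟩ := ev_rpow_le (3 * θ / 4) (c / 2) (by linarith) (by linarith)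
  obtain ⟨M2, hM2⟩ := ev_rpow_le (δ / 2) (c / (4 * ((K' : ℝ) + 1) ^ 2))
    (by linarith) (by positivity)
  obtain ⟨M3, hM3⟩ := ev_rpow_le (3 * ξ / 4) (c / (4 * ((K' : ℝ) + 2)))
    (by linarith) (by positivity)
  refine ⟨max (max (max N1 N2) (max ((Finset.range (K' + 1)).sup Nim)
    ((Finset.range (K' + 2)).sup Nk))) (max (max M1 M2) (max M3 (2 * K' + 5))), ?_⟩
  intro n hn
  simp only [max_le_iff] at hn
  obtain ⟨⟨⟨hnN1, hnN2⟩, hnNim, hnNk⟩, ⟨hnM1, hnM2⟩, hnM3, hncnt⟩ := hn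
  have hn1 : 1 ≤ n := by omega
  have hN0 : (0:ℝ) < (n : ℝ) := by exact_mod_cast Nat.lt_of_lt_of_le Nat.zero_lt_one hn1
  have hN1' : (1:ℝ) ≤ (n : ℝ) := by exact_mod_cast hn1
  have hNnn : (0:ℝ) ≤ (n : ℝ) := le_of_lt hN0
  -- κ facts
  obtain ⟨hκlow0, hκ1⟩ := hκ n hn1
  have hκlow : (n:ℝ) ^ (-δ - (1/2 + β)) ≤ κ n := by
    have hrw : (n:ℝ) ^ (-δ) / (Real.sqrt n * q n) = (n:ℝ) ^ (-δ - (1/2 + β)) := by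
      rw [hq n, Real.sqrt_eq_rpow, ← Real.rpow_add hN0, div_eq_mul_inv,
        ← Real.rpow_neg hNnn, ← Real.rpow_add hN0]
      congr 1 <;> ring
    rw [← hrw]; exact hκlow0
  have hκ0 : 0 < κ n := lt_of_lt_of_le (Real.rpow_pos_of_pos hN0 _) hκlow
  have hs0 : 0 < Real.sqrt (κ n) := Real.sqrt_pos.mpr hκ0
  have hs1 : Real.sqrt (κ n) ≤ 1 := Real.sqrt_le_one.mpr hκ1
  have hslow : (n:ℝ) ^ ((-δ - (1/2 + β)) / 2) ≤ Real.sqrt (κ n) := by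
    have h1 : Real.sqrt ((n:ℝ) ^ (-δ - (1/2 + β))) = (n:ℝ) ^ ((-δ - (1/2 + β)) / 2) := by
      rw [Real.sqrt_eq_rpow, ← Real.rpow_mul hNnn]
      congr 1; ring
    rw [← h1]; exact Real.sqrt_le_sqrt hκlow
  -- η and b
  have hbN : (n:ℝ) ^ (1 + δ) * η n = (n:ℝ) ^ ((3:ℝ)/8 - β/4) := by
    have hqq : q n ^ (-(1:ℝ)/4) = (n:ℝ) ^ (β * (-(1:ℝ)/4)) := by
      rw [hq n]; exact (Real.rpow_mul hNnn β (-(1:ℝ)/4)).symm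
    rw [hη n, hqq, ← Real.rpow_add hN0, ← Real.rpow_add hN0, ← Real.rpow_add hN0]
    congr 1; ring
  have hb : 1 / ((n:ℝ) ^ (1 + δ) * η n) = (n:ℝ) ^ (β/4 - (3:ℝ)/8) := by
    rw [hbN, one_div, ← Real.rpow_neg hNnn]; congr 1; ring
  have hb0 : 0 ≤ 1 / ((n:ℝ) ^ (1 + δ) * η n) := by
    rw [hb]; exact Real.rpow_nonneg hNnn _
  -- scalar bounds
  have r1 : (n:ℝ) ^ (ξ' - δ) ≤ 1 := Real.rpow_le_one_of_one_le_of_nonpos hN1' (by linarith)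
  have r2 : (n:ℝ) ^ (ξ' - θ) ≤ c / 2 :=
    le_trans (Real.rpow_le_rpow_of_exponent_le hN1' (by linarith)) (hM1 n hnM1)
  have r3 : (n:ℝ) ^ (ξ' + ξ' - δ) ≤ c / (4 * ((K' : ℝ) + 1) ^ 2) :=
    le_trans (Real.rpow_le_rpow_of_exponent_le hN1' (by linarith)) (hM2 n hnM2)
  have r4 : 4 * ((K' : ℝ) + 2) / c ≤ (n:ℝ) ^ (ξ - ξ') := by
    have h1 : (n:ℝ) ^ (-(ξ - ξ')) ≤ c / (4 * ((K' : ℝ) + 2)) :=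
      le_trans (Real.rpow_le_rpow_of_exponent_le hN1' (by linarith)) (hM3 n hnM3)
    rw [Real.rpow_neg hNnn] at h1
    calc 4 * ((K' : ℝ) + 2) / c = (c / (4 * ((K' : ℝ) + 2)))⁻¹ := by rw [inv_div]
      _ ≤ (((n:ℝ) ^ (ξ - ξ'))⁻¹)⁻¹ := inv_anti₀ (by positivity) h1
      _ = (n:ℝ) ^ (ξ - ξ') := inv_inv _
  have hε' := hε n hn1
  have hε0 : 0 ≤ ε n := le_trans (by positivity) hε'.1
  -- core parameters
  have hAeq : (n:ℝ) ^ ξ' * (Real.sqrt (κ n) * (n:ℝ) ^ (-δ))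
      = (n:ℝ) ^ (ξ' - δ) * Real.sqrt (κ n) := by
    rw [show ξ' - δ = ξ' + -δ by ring, Real.rpow_add hN0]; ring
  have hAs : (n:ℝ) ^ ξ' * (Real.sqrt (κ n) * (n:ℝ) ^ (-δ)) ≤ Real.sqrt (κ n) := by
    rw [hAeq]
    calc (n:ℝ) ^ (ξ' - δ) * Real.sqrt (κ n) ≤ 1 * Real.sqrt (κ n) :=
          mul_le_mul_of_nonneg_right r1 hs0.le
      _ = Real.sqrt (κ n) := one_mul _
  have hA1 : (n:ℝ) ^ ξ' * (Real.sqrt (κ n) * (n:ℝ) ^ (-δ)) ≤ 1 := le_trans hAs hs1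
  have hBle : (n:ℝ) ^ ξ' * (1 / ((n:ℝ) ^ (1 + δ) * η n)) ≤ c / 2 * Real.sqrt (κ n) := by
    have hBeq : (n:ℝ) ^ ξ' * (1 / ((n:ℝ) ^ (1 + δ) * η n))
        = (n:ℝ) ^ (ξ' - θ) * (n:ℝ) ^ ((-δ - (1/2 + β)) / 2) := by
      rw [hb, ← Real.rpow_add hN0, ← Real.rpow_add hN0]
      congr 1
      rw [hθdef]; ring
    rw [hBeq]
    exact mul_le_mul r2 hslow (Real.rpow_nonneg hNnn _) (by linarith)
  have hB0 : 0 ≤ (n:ℝ) ^ ξ' * (1 / ((n:ℝ) ^ (1 + δ) * η n)) :=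
    mul_nonneg (Real.rpow_nonneg hNnn _) hb0
  have hM0 : 0 ≤ (n:ℝ) ^ ξ' := Real.rpow_nonneg hNnn _
  have habs : ((K' : ℝ) + 1) ^ 2 * ((n:ℝ) ^ ξ')
      * ((n:ℝ) ^ ξ' * (Real.sqrt (κ n) * (n:ℝ) ^ (-δ))) ≤ c / 4 * Real.sqrt (κ n) := by
    have h5 : ((K' : ℝ) + 1) ^ 2 * ((n:ℝ) ^ ξ')
        * ((n:ℝ) ^ ξ' * (Real.sqrt (κ n) * (n:ℝ) ^ (-δ)))
        = (((K' : ℝ) + 1) ^ 2 * (n:ℝ) ^ (ξ' + ξ' - δ)) * Real.sqrt (κ n) := by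
      rw [hAeq, show ξ' + ξ' - δ = ξ' + (ξ' - δ) by ring, Real.rpow_add hN0]; ring
    rw [h5]
    have h6 : ((K' : ℝ) + 1) ^ 2 * (n:ℝ) ^ (ξ' + ξ' - δ) ≤ c / 4 := by
      have h7 := mul_le_mul_of_nonneg_left r3 (by positivity : (0:ℝ) ≤ ((K' : ℝ) + 1) ^ 2)
      have h8 : ((K' : ℝ) + 1) ^ 2 * (c / (4 * ((K' : ℝ) + 1) ^ 2)) = c / 4 := by
        field_simp
      linarith
    exact mul_le_mul_of_nonneg_right h6 hs0.le
  -- events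
  have hsub : {ω | (n:ℝ) ^ ξ * (ε n / Real.sqrt (κ n) + 1 / ((n:ℝ) ^ (1 + δ) * η n))
        < |(|(G n ω).im - (m n ω).im|)|}
      ⊆ ({ω | (n:ℝ) ^ ξ' * (Real.sqrt (κ n) * (n:ℝ) ^ (-δ)) < |(‖G n ω - m n ω‖)|}
        ∪ {ω | (n:ℝ) ^ ξ' * ε n < |(|(Pz n ω (G n ω)).im|)|})
      ∪ ((⋃ k ∈ Finset.range (K' + 1),
            {ω | (n:ℝ) ^ ξ' * (1 / ((n:ℝ) ^ (1 + δ) * η n))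
              < |(|(iteratedDeriv (k + 1) (Pz n ω) (m n ω)).im|)|})
        ∪ (⋃ k ∈ Finset.range (K' + 2),
            {ω | (n:ℝ) ^ ξ' * 1 < |(‖iteratedDeriv k (Pz n ω) (m n ω)‖)|})) := by
    intro ω hω
    by_contra hbad
    simp only [Set.mem_union, not_or, Set.mem_setOf_eq, Set.mem_iUnion, not_exists] at hbad
    obtain ⟨⟨hg0, hg4⟩, hgU1, hgU2⟩ := hbad
    rw [Set.mem_setOf_eq, abs_abs] at hω
    rw [not_lt, abs_norm] at hg0
    rw [not_lt, abs_abs] at hg4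
    have hgim : ∀ k, k < K' + 1 →
        |(iteratedDeriv (k + 1) (Pz n ω) (m n ω)).im|
          ≤ (n:ℝ) ^ ξ' * (1 / ((n:ℝ) ^ (1 + δ) * η n)) := by
      intro k hk
      have := hgU1 k (Finset.mem_range.mpr hk)
      rw [not_lt, abs_abs] at this
      exact this
    have hgnm : ∀ k, k < K' + 2 →
        ‖iteratedDeriv k (Pz n ω) (m n ω)‖ ≤ (n:ℝ) ^ ξ' := by
      intro k hk
      have := hgU2 k (Finset.mem_range.mpr hk)
      rw [not_lt, abs_norm, mul_one] at this
      exact this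
    -- polynomial structure
    obtain ⟨p, hdeg, hpeq⟩ := hpoly n ω
    have hdeg' : p.natDegree ≤ K' + 1 := hK' ▸ hdeg
    have hPzf : Pz n ω = fun x => p.eval x := funext hpeq
    have hit : ∀ k : ℕ, iteratedDeriv k (Pz n ω) (m n ω)
        = (Nat.factorial k : ℂ) * (Polynomial.hasseDeriv k p).eval (m n ω) := by
      intro k
      rw [hPzf, poly_iteratedDeriv']
      exact hasse_eval' p k (m n ω)
    have hfge : ∀ k : ℕ,
        |((Polynomial.hasseDeriv k p).eval (m n ω)).im|
            ≤ |((Nat.factorial k : ℂ) * (Polynomial.hasseDeriv k p).eval (m n ω)).im|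
        ∧ ‖(Polynomial.hasseDeriv k p).eval (m n ω)‖
            ≤ ‖(Nat.factorial k : ℂ) * (Polynomial.hasseDeriv k p).eval (m n ω)‖ := by
      intro k
      have hf1 : (1:ℝ) ≤ (Nat.factorial k : ℝ) := by
        exact_mod_cast Nat.one_le_iff_ne_zero.mpr (Nat.factorial_ne_zero k)
      constructor
      · have him : ((Nat.factorial k : ℂ) * (Polynomial.hasseDeriv k p).eval (m n ω)).im
            = (Nat.factorial k : ℝ) * ((Polynomial.hasseDeriv k p).eval (m n ω)).im := by
          simp [Complex.mul_im]
        rw [him, abs_mul, abs_of_nonneg (by positivity : (0:ℝ) ≤ (Nat.factorial k : ℝ))]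
        exact le_mul_of_one_le_left (abs_nonneg _) hf1
      · rw [norm_mul]
        have hnf : ‖(Nat.factorial k : ℂ)‖ = (Nat.factorial k : ℝ) := by
          simp
        rw [hnf]
        exact le_mul_of_one_le_left (norm_nonneg _) hf1
    have hT0 : Pz n ω (G n ω) = ∑ k ∈ Finset.range (K' + 2),
        (Polynomial.hasseDeriv k p).eval (m n ω) * (G n ω - m n ω) ^ k := by
      rw [hpeq (G n ω), poly_expand' p (K' + 1) hdeg' (m n ω) (G n ω)]
    have h0 : (Polynomial.hasseDeriv 0 p).eval (m n ω) = 0 := by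
      rw [Polynomial.hasseDeriv_zero]
      simpa using (hpeq (m n ω)) ▸ hroot n ω
    have h1 : c * Real.sqrt (κ n) ≤ ‖(Polynomial.hasseDeriv 1 p).eval (m n ω)‖ := by
      have hd := (hPder n hn1 ω).1
      have heq : deriv (Pz n ω) (m n ω) = (Polynomial.hasseDeriv 1 p).eval (m n ω) := by
        rw [← iteratedDeriv_one, hit 1]
        simp [Nat.factorial]
      rwa [heq] at hd
    have h1i : |((Polynomial.hasseDeriv 1 p).eval (m n ω)).im|
        ≤ (n:ℝ) ^ ξ' * (1 / ((n:ℝ) ^ (1 + δ) * η n)) := by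
      have hg := hgim 0 (by omega)
      rw [hit 1] at hg
      exact le_trans (hfge 1).1 hg
    have hki : ∀ i, i < K' → |((Polynomial.hasseDeriv (i + 2) p).eval (m n ω)).im|
        ≤ (n:ℝ) ^ ξ' * (1 / ((n:ℝ) ^ (1 + δ) * η n)) := by
      intro i hi
      have hg := hgim (i + 1) (by omega)
      rw [hit (i + 2)] at hg
      exact le_trans (hfge (i + 2)).1 hg
    have hkn : ∀ i, i < K' → ‖(Polynomial.hasseDeriv (i + 2) p).eval (m n ω)‖
        ≤ (n:ℝ) ^ ξ' := by
      intro i hi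
      have hg := hgnm (i + 2) (by omega)
      rw [hit (i + 2)] at hg
      exact le_trans (hfge (i + 2)).2 hg
    have hT : |(∑ k ∈ Finset.range (K' + 2),
        (Polynomial.hasseDeriv k p).eval (m n ω) * (G n ω - m n ω) ^ k).im|
        ≤ (n:ℝ) ^ ξ' * ε n := by
      rw [← hT0]; exact hg4
    have hcore := core_est K' c (Real.sqrt (κ n))
      ((n:ℝ) ^ ξ' * (Real.sqrt (κ n) * (n:ℝ) ^ (-δ)))
      ((n:ℝ) ^ ξ' * (1 / ((n:ℝ) ^ (1 + δ) * η n)))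
      ((n:ℝ) ^ ξ') ((n:ℝ) ^ ξ' * ε n) (G n ω - m n ω)
      (fun k => (Polynomial.hasseDeriv k p).eval (m n ω))
      hc hs0 hT h0 h1 h1i hki hkn hg0 hA1 hAs hBle hB0 habs hM0
    -- conclude
    have hY0 : 0 ≤ ε n / Real.sqrt (κ n) + 1 / ((n:ℝ) ^ (1 + δ) * η n) :=
      add_nonneg (div_nonneg hε0 hs0.le) hb0
    have hfinal : |(G n ω - m n ω).im|
        ≤ (n:ℝ) ^ ξ * (ε n / Real.sqrt (κ n) + 1 / ((n:ℝ) ^ (1 + δ) * η n)) := by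
      have h8 : 4 / c ≤ 4 * ((K' : ℝ) + 2) / c := by
        have : (4:ℝ) ≤ 4 * ((K' : ℝ) + 2) := by
          have := Nat.cast_nonneg (α := ℝ) K'
          linarith
        gcongr
      have e2 : 4 / c * (ε n / Real.sqrt (κ n))
          + 4 * ((K' : ℝ) + 2) / c * (1 / ((n:ℝ) ^ (1 + δ) * η n))
          ≤ 4 * ((K' : ℝ) + 2) / c
            * (ε n / Real.sqrt (κ n) + 1 / ((n:ℝ) ^ (1 + δ) * η n)) := by
        rw [mul_add (4 * ((K' : ℝ) + 2) / c)]
        exact add_le_add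
          (mul_le_mul_of_nonneg_right h8 (div_nonneg hε0 hs0.le)) le_rfl
      calc |(G n ω - m n ω).im|
          ≤ 4 / c * (((n:ℝ) ^ ξ' * ε n) / Real.sqrt (κ n))
            + 4 * ((K' : ℝ) + 2) / c * ((n:ℝ) ^ ξ' * (1 / ((n:ℝ) ^ (1 + δ) * η n))) := hcore
        _ = (n:ℝ) ^ ξ' * (4 / c * (ε n / Real.sqrt (κ n))
            + 4 * ((K' : ℝ) + 2) / c * (1 / ((n:ℝ) ^ (1 + δ) * η n))) := by ring
        _ ≤ (n:ℝ) ^ ξ' * (4 * ((K' : ℝ) + 2) / c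
            * (ε n / Real.sqrt (κ n) + 1 / ((n:ℝ) ^ (1 + δ) * η n))) :=
            mul_le_mul_of_nonneg_left e2 hM0
        _ = (4 * ((K' : ℝ) + 2) / c) * (n:ℝ) ^ ξ'
            * (ε n / Real.sqrt (κ n) + 1 / ((n:ℝ) ^ (1 + δ) * η n)) := by ring
        _ ≤ (n:ℝ) ^ (ξ - ξ') * (n:ℝ) ^ ξ'
            * (ε n / Real.sqrt (κ n) + 1 / ((n:ℝ) ^ (1 + δ) * η n)) :=
            mul_le_mul_of_nonneg_right (mul_le_mul_of_nonneg_right r4 hM0) hY0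
        _ = (n:ℝ) ^ ξ * (ε n / Real.sqrt (κ n) + 1 / ((n:ℝ) ^ (1 + δ) * η n)) := by
            rw [← Real.rpow_add hN0]
            congr 2
            ring
    have him_eq : (G n ω).im - (m n ω).im = (G n ω - m n ω).im := (Complex.sub_im _ _).symm
    rw [him_eq] at hω
    exact absurd hω (not_lt.mpr hfinal)
  -- measure estimate
  have hz1 : P n {ω | (n:ℝ) ^ ξ' * (Real.sqrt (κ n) * (n:ℝ) ^ (-δ)) < |(‖G n ω - m n ω‖)|}
      ≤ ENNReal.ofReal ((n:ℝ) ^ (-(D + 1))) := H1 n hnN1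
  have hz2 : P n {ω | (n:ℝ) ^ ξ' * ε n < |(|(Pz n ω (G n ω)).im|)|}
      ≤ ENNReal.ofReal ((n:ℝ) ^ (-(D + 1))) := H2 n hnN2
  have hz3 : ∀ k ∈ Finset.range (K' + 1),
      P n {ω | (n:ℝ) ^ ξ' * (1 / ((n:ℝ) ^ (1 + δ) * η n))
        < |(|(iteratedDeriv (k + 1) (Pz n ω) (m n ω)).im|)|}
      ≤ ENNReal.ofReal ((n:ℝ) ^ (-(D + 1))) := by
    intro k hk
    exact Him k n (le_trans (Finset.le_sup hk) hnNim)
  have hz4 : ∀ k ∈ Finset.range (K' + 2),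
      P n {ω | (n:ℝ) ^ ξ' * 1 < |(‖iteratedDeriv k (Pz n ω) (m n ω)‖)|}
      ≤ ENNReal.ofReal ((n:ℝ) ^ (-(D + 1))) := by
    intro k hk
    exact Hk k n (le_trans (Finset.le_sup hk) hnNk)
  calc P n {ω | (n:ℝ) ^ ξ * (ε n / Real.sqrt (κ n) + 1 / ((n:ℝ) ^ (1 + δ) * η n))
        < |(|(G n ω).im - (m n ω).im|)|}
      ≤ P n (({ω | (n:ℝ) ^ ξ' * (Real.sqrt (κ n) * (n:ℝ) ^ (-δ)) < |(‖G n ω - m n ω‖)|}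
          ∪ {ω | (n:ℝ) ^ ξ' * ε n < |(|(Pz n ω (G n ω)).im|)|})
        ∪ ((⋃ k ∈ Finset.range (K' + 1),
              {ω | (n:ℝ) ^ ξ' * (1 / ((n:ℝ) ^ (1 + δ) * η n))
                < |(|(iteratedDeriv (k + 1) (Pz n ω) (m n ω)).im|)|})
          ∪ (⋃ k ∈ Finset.range (K' + 2),
              {ω | (n:ℝ) ^ ξ' * 1 < |(‖iteratedDeriv k (Pz n ω) (m n ω)‖)|}))) :=
        measure_mono hsub
    _ ≤ (ENNReal.ofReal ((n:ℝ) ^ (-(D + 1))) + ENNReal.ofReal ((n:ℝ) ^ (-(D + 1))))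
        + ((K' + 1 : ℕ) * ENNReal.ofReal ((n:ℝ) ^ (-(D + 1)))
          + (K' + 2 : ℕ) * ENNReal.ofReal ((n:ℝ) ^ (-(D + 1)))) := by
        refine le_trans (measure_union_le _ _) (add_le_add ?_ ?_)
        · exact le_trans (measure_union_le _ _) (add_le_add hz1 hz2)
        · refine le_trans (measure_union_le _ _) (add_le_add ?_ ?_)
          · refine le_trans (measure_biUnion_finset_le _ _) ?_
            refine le_trans (Finset.sum_le_sum hz3) ?_
            rw [Finset.sum_const, Finset.card_range, nsmul_eq_mul]
          · refine le_trans (measure_biUnion_finset_le _ _) ?_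
            refine le_trans (Finset.sum_le_sum hz4) ?_
            rw [Finset.sum_const, Finset.card_range, nsmul_eq_mul]
    _ = ((2 * K' + 5 : ℕ) : ENNReal) * ENNReal.ofReal ((n:ℝ) ^ (-(D + 1))) := by
        push_cast
        ring
    _ ≤ ENNReal.ofReal ((n:ℝ) ^ (-D)) := by
        rw [show ((2 * K' + 5 : ℕ) : ENNReal) = ENNReal.ofReal ((2 * K' + 5 : ℕ) : ℝ) by
          rw [ENNReal.ofReal_natCast]]
        rw [← ENNReal.ofReal_mul (by positivity)]
        apply ENNReal.ofReal_le_ofReal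
        have hcnt : ((2 * K' + 5 : ℕ) : ℝ) ≤ (n : ℝ) := by exact_mod_cast hncnt
        calc ((2 * K' + 5 : ℕ) : ℝ) * (n:ℝ) ^ (-(D + 1))
            ≤ (n:ℝ) * (n:ℝ) ^ (-(D + 1)) :=
              mul_le_mul_of_nonneg_right hcnt (Real.rpow_nonneg hNnn _)
          _ = (n:ℝ) ^ (-D) := by
              rw [show -D = 1 + (-(D + 1)) by ring, Real.rpow_add hN0, Real.rpow_one]
end

section
/- Quantile shift under random rescaling: Let ϱ₀ be a symmetric probability measure on [−L₀, L₀] with square-root edges (density ≍ √(L₀²−E²)), and let γ_{0,i} denote its i-th N-quantile. Let ϱ be the push-forward of ϱ₀ under multiplication by (1 + 𝒵/2)(1 + O_≺(ε)) with random 𝒵 ≺ N^{-1/2}q^{-1} and ε = 1/(√N q³). Then the i-th N-quantile γ_i of ϱ satisfies γ_i = γ_{0,i} + (γ_{0,i}/2)𝒵 + O_≺(1/(√N q³)) uniformly in i ∈ {1,…,N}. -/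
open MeasureTheory

/-- The measure with a density bounded below by `c √(L² − x²)` gives positive mass to any
nontrivial interval inside `[−L, L]`. -/
lemma Ioc_pos_of_sqrt_lower (ρ : ℝ → ℝ) (L c : ℝ) (hc : 0 < c)
    (hlow : ∀ x ∈ Set.Icc (-L) L, c * Real.sqrt (L ^ 2 - x ^ 2) ≤ ρ x)
    {a b : ℝ} (ha : -L ≤ a) (hb : b ≤ L) (hab : a < b) :
    0 < (volume.withDensity (fun x => ENNReal.ofReal (ρ x))) (Set.Ioc a b) := by
  set m' := a + (b - a) / 4 with hm'
  set m := a + (b - a) / 2 with hm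
  have h1 : a < m' := by simp only [hm']; linarith
  have h2 : m' < m := by simp only [hm', hm]; linarith
  have h3 : m < b := by simp only [hm]; linarith
  set δ := (L - m) * (L + m') with hδ
  have hδpos : 0 < δ := mul_pos (by linarith) (by linarith)
  have key : ∀ x ∈ Set.Ioc m' m, c * Real.sqrt δ ≤ ρ x := by
    intro x hx
    have hx1 : m' < x := hx.1
    have hx2 : x ≤ m := hx.2
    have hxm : x ∈ Set.Icc (-L) L := ⟨by linarith, by linarith⟩
    have hδle : δ ≤ L ^ 2 - x ^ 2 := by nlinarith
    calc c * Real.sqrt δ ≤ c * Real.sqrt (L ^ 2 - x ^ 2) :=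
          mul_le_mul_of_nonneg_left (Real.sqrt_le_sqrt hδle) hc.le
      _ ≤ ρ x := hlow x hxm
  rw [withDensity_apply _ measurableSet_Ioc]
  have hsub : Set.Ioc m' m ⊆ Set.Ioc a b := Set.Ioc_subset_Ioc h1.le h3.le
  have h1' : ∫⁻ x in Set.Ioc a b,
      (Set.Ioc m' m).indicator (fun _ => ENNReal.ofReal (c * Real.sqrt δ)) x
      = ENNReal.ofReal (c * Real.sqrt δ) * volume (Set.Ioc m' m) := by
    rw [lintegral_indicator measurableSet_Ioc, setLIntegral_const,
      Measure.restrict_apply measurableSet_Ioc, Set.inter_eq_self_of_subset_left hsub]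
  have hmono : ∫⁻ x in Set.Ioc a b,
      (Set.Ioc m' m).indicator (fun _ => ENNReal.ofReal (c * Real.sqrt δ)) x
      ≤ ∫⁻ x in Set.Ioc a b, ENNReal.ofReal (ρ x) := by
    refine lintegral_mono fun x => ?_
    by_cases hx : x ∈ Set.Ioc m' m
    · simp only [Set.indicator_of_mem hx]
      exact ENNReal.ofReal_le_ofReal (key x hx)
    · simp [Set.indicator_of_notMem hx]
  have hpos : 0 < ENNReal.ofReal (c * Real.sqrt δ) * volume (Set.Ioc m' m) := by
    refine ENNReal.mul_pos ?_ ?_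
    · exact (ENNReal.ofReal_pos.mpr (mul_pos hc (Real.sqrt_pos.mpr hδpos))).ne'
    · rw [Real.volume_Ioc]
      exact (ENNReal.ofReal_pos.mpr (by linarith)).ne'
  calc (0 : ENNReal) < ENNReal.ofReal (c * Real.sqrt δ) * volume (Set.Ioc m' m) := hpos
    _ = _ := h1'.symm
    _ ≤ _ := hmono

/-- Injectivity of the CDF inside `[−L, L]` for a measure with square-root lower bound
on the density. -/
lemma cdf_inj (μ : Measure ℝ) (ρ : ℝ → ℝ) (L c : ℝ) (hc : 0 < c)
    (hμ : μ = volume.withDensity fun x => ENNReal.ofReal (ρ x))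
    (hlow : ∀ x ∈ Set.Icc (-L) L, c * Real.sqrt (L ^ 2 - x ^ 2) ≤ ρ x)
    {a b : ℝ} (ha : |a| ≤ L) (hb : |b| ≤ L)
    (hfa : μ (Set.Iic a) ≠ ⊤)
    (heq : μ (Set.Iic a) = μ (Set.Iic b)) : a = b := by
  have hkey : ∀ x y : ℝ, |x| ≤ L → |y| ≤ L → μ (Set.Iic x) ≠ ⊤ →
      μ (Set.Iic x) = μ (Set.Iic y) → x < y → False := by
    intro x y hx hy hfx heq' hxy
    have hsum : μ (Set.Iic x) + μ (Set.Ioc x y) = μ (Set.Iic y) := by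
      rw [← measure_union (Set.Iic_disjoint_Ioc le_rfl) measurableSet_Ioc,
        Set.Iic_union_Ioc_eq_Iic hxy.le]
    have hzero : μ (Set.Ioc x y) = 0 := by
      rw [← heq'] at hsum
      have h0 : μ (Set.Iic x) + μ (Set.Ioc x y) = μ (Set.Iic x) + 0 := by
        rw [add_zero]; exact hsum
      exact (ENNReal.add_right_inj hfx).mp h0
    have hpos : 0 < μ (Set.Ioc x y) := by
      rw [hμ]
      exact Ioc_pos_of_sqrt_lower ρ L c hc hlow ((abs_le.mp hx).1) ((abs_le.mp hy).2) hxy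
    exact hpos.ne' hzero
  rcases lt_trichotomy a b with h | h | h
  · exact absurd h fun h' => hkey a b ha hb hfa heq h'
  · exact h
  · exact absurd h fun h' => hkey b a hb ha (heq ▸ hfa) heq.symm h'

set_option maxHeartbeats 1600000 in
/-- **Quantile shift under random rescaling**: let `ϱ₀` be a symmetric probability measure on
`[−L₀, L₀]` with square-root edges, `γ₀ᵢ` its `i`-th `N`-quantile, and let `ϱ` be the push-forward
of `ϱ₀` under multiplication by `T = (1 + 𝒵/2)(1 + O_≺(ε))` with `𝒵 ≺ N^{-1/2}q^{-1}` and
`ε = 1/(√N q³)`.  Then the `i`-th `N`-quantile `γᵢ` of `ϱ` satisfies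
`γᵢ = γ₀ᵢ + (γ₀ᵢ/2)𝒵 + O_≺(1/(√N q³))` uniformly in `i ∈ {1,…,N}`. -/
theorem quantile_shift_random_rescaling
    {Ω : ℕ → Type*} [∀ n, MeasurableSpace (Ω n)]
    (P : ∀ n, Measure (Ω n)) [∀ n, IsProbabilityMeasure (P n)]
    (β : ℝ) (hβ : 0 < β) (hβ' : β < 1 / 6)
    (q : ℕ → ℝ) (hq : ∀ n : ℕ, q n = (n : ℝ) ^ β)
    (ϱ₀ : ℕ → Measure ℝ) (hprob : ∀ n, IsProbabilityMeasure (ϱ₀ n))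
    (ρ : ℕ → ℝ → ℝ) (L₀ : ℕ → ℝ)
    (hL₀ : ∀ n, 1 ≤ L₀ n ∧ L₀ n ≤ 3)
    (hdens : ∀ n, ϱ₀ n = volume.withDensity (fun x => ENNReal.ofReal (ρ n x)))
    (hsupp : ∀ n, ∀ x ∉ Set.Icc (-(L₀ n)) (L₀ n), ρ n x = 0)
    (hsym : ∀ n x, ρ n (-x) = ρ n x)
    (hedge : ∃ c C : ℝ, 0 < c ∧ 0 < C ∧ ∀ n, ∀ x ∈ Set.Icc (-(L₀ n)) (L₀ n),
      c * Real.sqrt ((L₀ n) ^ 2 - x ^ 2) ≤ ρ n x ∧ ρ n x ≤ C * Real.sqrt ((L₀ n) ^ 2 - x ^ 2))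
    (Z err : ∀ n, Ω n → ℝ)
    (hZ : SDom P Z (fun n => 1 / (Real.sqrt n * q n)))
    (herr : SDom P err (fun n => 1 / (Real.sqrt n * q n ^ 3)))
    (γ₀ : ℕ → ℕ → ℝ) (γ : ∀ n : ℕ, ℕ → Ω n → ℝ)
    (hγ₀ : ∀ n : ℕ, ∀ i : ℕ, 1 ≤ i → i ≤ n →
      ϱ₀ n (Set.Iic (γ₀ n i)) = ENNReal.ofReal ((i : ℝ) / n) ∧ |γ₀ n i| ≤ L₀ n)
    (hγ : ∀ n : ℕ, ∀ i : ℕ, 1 ≤ i → i ≤ n → ∀ ω,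
      ((ϱ₀ n).map (fun x => (1 + Z n ω / 2) * (1 + err n ω) * x)) (Set.Iic (γ n i ω))
          = ENNReal.ofReal ((i : ℝ) / n) ∧
        |γ n i ω| ≤ (1 + Z n ω / 2) * (1 + err n ω) * L₀ n) :
    ∀ ε : ℝ, 0 < ε → ∀ D : ℝ, 0 < D → ∃ N₀ : ℕ, ∀ n, N₀ ≤ n → ∀ i : ℕ, 1 ≤ i → i ≤ n →
      P n {ω | (n : ℝ) ^ ε * (1 / (Real.sqrt n * q n ^ 3))
            < |γ n i ω - γ₀ n i - γ₀ n i / 2 * Z n ω|}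
        ≤ ENNReal.ofReal ((n : ℝ) ^ (-D)) := by
  obtain ⟨c, C, hc, hC, hedge'⟩ := hedge
  intro ε hε D hD
  set ε₁ : ℝ := min ε 1 / 2 with hε₁def
  have hmin1 : 0 < min ε 1 := lt_min hε one_pos
  have hmin2 : min ε 1 ≤ 1 := min_le_right _ _
  have hmin3 : min ε 1 ≤ ε := min_le_left _ _
  have hε₁pos : 0 < ε₁ := by simp only [hε₁def]; linarith
  have hε₁le : ε₁ ≤ 1 / 2 := by simp only [hε₁def]; linarith
  have hε₁lt : ε₁ < ε := by simp only [hε₁def]; linarith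
  obtain ⟨N₁, hN₁⟩ := hZ ε₁ hε₁pos (D + 1) (by linarith)
  obtain ⟨N₂, hN₂⟩ := herr ε₁ hε₁pos (D + 1) (by linarith)
  have htend : Filter.Tendsto (fun n : ℕ => (n : ℝ) ^ (ε - ε₁)) Filter.atTop Filter.atTop :=
    (tendsto_rpow_atTop (by linarith)).comp tendsto_natCast_atTop_atTop
  obtain ⟨N₃, hN₃⟩ := Filter.eventually_atTop.mp (htend.eventually_ge_atTop (9 / 2))
  refine ⟨max (max N₁ N₂) (max N₃ 2), fun n hn i hi1 hi2 => ?_⟩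
  have hnN₁ : N₁ ≤ n := le_trans (le_trans (le_max_left N₁ N₂) (le_max_left _ _)) hn
  have hnN₂ : N₂ ≤ n := le_trans (le_trans (le_max_right N₁ N₂) (le_max_left _ _)) hn
  have hnN₃ : N₃ ≤ n := le_trans (le_trans (le_max_left N₃ 2) (le_max_right _ _)) hn
  have hn2 : 2 ≤ n := le_trans (le_trans (le_max_right N₃ 2) (le_max_right _ _)) hn
  have hn2' : (2 : ℝ) ≤ (n : ℝ) := by exact_mod_cast hn2
  have hn0 : (0 : ℝ) < n := by linarith
  have hn1 : (1 : ℝ) ≤ n := by linarith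
  have hn1' : (1 : ℝ) < n := by linarith
  have hqpos : 0 < q n := by rw [hq]; positivity
  have hsq : 0 < Real.sqrt n := Real.sqrt_pos.mpr hn0
  have hzb : (n : ℝ) ^ ε₁ * (1 / (Real.sqrt n * q n)) = (n : ℝ) ^ (ε₁ - (1 / 2 + β)) := by
    rw [hq, Real.sqrt_eq_rpow, ← Real.rpow_add hn0, one_div, ← Real.rpow_neg hn0.le,
      ← Real.rpow_add hn0, sub_eq_add_neg]
  have h3q : q n ^ 3 = (n : ℝ) ^ (3 * β) := by
    rw [hq, ← Real.rpow_natCast ((n : ℝ) ^ β) 3, ← Real.rpow_mul hn0.le]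
    congr 1
    push_cast
    ring
  have heb : (n : ℝ) ^ ε₁ * (1 / (Real.sqrt n * q n ^ 3))
      = (n : ℝ) ^ (ε₁ - (1 / 2 + 3 * β)) := by
    rw [h3q, Real.sqrt_eq_rpow, ← Real.rpow_add hn0, one_div, ← Real.rpow_neg hn0.le,
      ← Real.rpow_add hn0, sub_eq_add_neg]
  have hzb1 : (n : ℝ) ^ ε₁ * (1 / (Real.sqrt n * q n)) ≤ 1 := by
    rw [hzb]
    exact Real.rpow_le_one_of_one_le_of_nonpos hn1 (by linarith)
  have heb1 : (n : ℝ) ^ ε₁ * (1 / (Real.sqrt n * q n ^ 3)) < 1 := by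
    rw [heb]
    exact Real.rpow_lt_one_of_one_lt_of_neg hn1' (by linarith)
  have hD' : 9 / 2 * (n : ℝ) ^ ε₁ ≤ (n : ℝ) ^ ε := by
    calc 9 / 2 * (n : ℝ) ^ ε₁ ≤ (n : ℝ) ^ (ε - ε₁) * (n : ℝ) ^ ε₁ :=
          mul_le_mul_of_nonneg_right (hN₃ n hnN₃) (Real.rpow_nonneg hn0.le _)
      _ = (n : ℝ) ^ ε := by rw [← Real.rpow_add hn0]; ring_nf
  have hbase : 0 ≤ 1 / (Real.sqrt n * q n ^ 3) := by positivity
  have hsubset : {ω | (n : ℝ) ^ ε * (1 / (Real.sqrt n * q n ^ 3))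
        < |γ n i ω - γ₀ n i - γ₀ n i / 2 * Z n ω|}
      ⊆ {ω | (n : ℝ) ^ ε₁ * (1 / (Real.sqrt n * q n)) < |Z n ω|}
        ∪ {ω | (n : ℝ) ^ ε₁ * (1 / (Real.sqrt n * q n ^ 3)) < |err n ω|} := by
    intro ω hω
    simp only [Set.mem_setOf_eq] at hω
    by_contra hcon
    simp only [Set.mem_union, Set.mem_setOf_eq, not_or, not_lt] at hcon
    obtain ⟨hZle, herrle⟩ := hcon
    have hZ1 : |Z n ω| ≤ 1 := hZle.trans hzb1
    have herr1 : |err n ω| < 1 := lt_of_le_of_lt herrle heb1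
    obtain ⟨hZl, hZr⟩ := abs_le.mp hZ1
    obtain ⟨herrl, herrr⟩ := abs_lt.mp herr1
    have hT1 : (0 : ℝ) < 1 + Z n ω / 2 := by linarith
    have hT2 : (0 : ℝ) < 1 + err n ω := by linarith
    have hTpos : 0 < (1 + Z n ω / 2) * (1 + err n ω) := mul_pos hT1 hT2
    obtain ⟨hmap, habs⟩ := hγ n i hi1 hi2 ω
    rw [Measure.map_apply (measurable_const_mul _) measurableSet_Iic] at hmap
    have hpre : (fun x => (1 + Z n ω / 2) * (1 + err n ω) * x) ⁻¹' Set.Iic (γ n i ω)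
        = Set.Iic (γ n i ω / ((1 + Z n ω / 2) * (1 + err n ω))) := by
      ext x
      simp only [Set.mem_preimage, Set.mem_Iic]
      rw [le_div_iff₀ hTpos, mul_comm]
    rw [hpre] at hmap
    obtain ⟨h0map, h0abs⟩ := hγ₀ n i hi1 hi2
    have hLpos : (0 : ℝ) < L₀ n := lt_of_lt_of_le one_pos (hL₀ n).1
    have habs' : |γ n i ω / ((1 + Z n ω / 2) * (1 + err n ω))| ≤ L₀ n := by
      rw [abs_div, abs_of_pos hTpos, div_le_iff₀ hTpos]
      calc |γ n i ω| ≤ (1 + Z n ω / 2) * (1 + err n ω) * L₀ n := habs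
        _ = L₀ n * ((1 + Z n ω / 2) * (1 + err n ω)) := by ring
    have heqab := cdf_inj (ϱ₀ n) (ρ n) (L₀ n) c hc (hdens n)
      (fun x hx => (hedge' n x hx).1) habs' h0abs
      (by rw [hmap]; exact ENNReal.ofReal_ne_top)
      (hmap.trans h0map.symm)
    have hγeq : γ n i ω = γ₀ n i * ((1 + Z n ω / 2) * (1 + err n ω)) :=
      (div_eq_iff hTpos.ne').mp heqab
    have hdiff : γ n i ω - γ₀ n i - γ₀ n i / 2 * Z n ω
        = γ₀ n i * (1 + Z n ω / 2) * err n ω := by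
      rw [hγeq]; ring
    have hb1 : |γ₀ n i| ≤ 3 := h0abs.trans (hL₀ n).2
    have hb2 : |1 + Z n ω / 2| ≤ 3 / 2 := abs_le.mpr ⟨by linarith, by linarith⟩
    have hbound : |γ n i ω - γ₀ n i - γ₀ n i / 2 * Z n ω|
        ≤ (n : ℝ) ^ ε * (1 / (Real.sqrt n * q n ^ 3)) := by
      rw [hdiff, abs_mul, abs_mul]
      calc |γ₀ n i| * |1 + Z n ω / 2| * |err n ω|
          ≤ 3 * (3 / 2) * ((n : ℝ) ^ ε₁ * (1 / (Real.sqrt n * q n ^ 3))) :=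
            mul_le_mul (mul_le_mul hb1 hb2 (abs_nonneg _) (by norm_num))
              herrle (abs_nonneg _) (by norm_num)
        _ = 9 / 2 * (n : ℝ) ^ ε₁ * (1 / (Real.sqrt n * q n ^ 3)) := by ring
        _ ≤ (n : ℝ) ^ ε * (1 / (Real.sqrt n * q n ^ 3)) :=
            mul_le_mul_of_nonneg_right hD' hbase
    exact absurd hω (not_lt.mpr hbound)
  refine le_trans (measure_mono hsubset) (le_trans (measure_union_le _ _) ?_)
  refine le_trans (add_le_add (hN₁ n hnN₁) (hN₂ n hnN₂)) ?_
  rw [← ENNReal.ofReal_add (Real.rpow_nonneg hn0.le _) (Real.rpow_nonneg hn0.le _)]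
  apply ENNReal.ofReal_le_ofReal
  have h1 : (n : ℝ) ^ (-(D + 1)) = (n : ℝ) ^ (-D) * (n : ℝ)⁻¹ := by
    rw [← Real.rpow_neg_one (n : ℝ), ← Real.rpow_add hn0]
    ring_nf
  have hnD : 0 ≤ (n : ℝ) ^ (-D) := Real.rpow_nonneg hn0.le _
  have hinvn : (n : ℝ)⁻¹ * (n : ℝ) = 1 := inv_mul_cancel₀ hn0.ne'
  have hinvpos : 0 ≤ (n : ℝ)⁻¹ := inv_nonneg.mpr hn0.le
  have hinv : (n : ℝ)⁻¹ ≤ 1 / 2 := by nlinarith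
  rw [h1]
  nlinarith [mul_le_mul_of_nonneg_left hinv hnD]
end
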